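/- Suppose k_i = k for all i, where k ≥ 1 is a fixed positive integer (so every vertex of T_n at depth m < n has exactly k children). Fix l ≥ 0 and a vertex v at depth l. Then p_n(v) → (1/k^l)·(2 − 1/k^l − 1/k^{l+1}) as n → ∞; in particular, for the root, p_n(root) → 1 − 1/k. -/

import Mathlib

open Finset Filter

namespace TreeTraffic

/-- `beta k l = k 1 * k 2 * ⋯ * k l`, with `beta k 0 = 1`. -/
def beta (k : ℕ → ℕ) (l : ℕ) : ℕ := ∏ i ∈ Finset.range l, k (i + 1)

/-- `Ncard k n = ∑_{l=0}^n beta k l`, the number of vertices of `T_n`. -/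
def Ncard (k : ℕ → ℕ) (n : ℕ) : ℕ := ∑ l ∈ Finset.range (n + 1), beta k l

/-- The set of admissible sequences of length exactly `m`:
vertices at depth `m`, i.e. lists `[x_1, …, x_m]` with `x_i ∈ {1, …, k i}`. -/
def level (k : ℕ → ℕ) : ℕ → Finset (List ℕ)
  | 0 => {[]}
  | m + 1 => (level k m).biUnion (fun l => (Finset.Icc 1 (k (m + 1))).image (fun x => l ++ [x]))

/-- The vertex set of the truncated tree `T_n`: all admissible sequences of length `≤ n`. -/
def T (k : ℕ → ℕ) (n : ℕ) : Finset (List ℕ) :=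
  (Finset.range (n + 1)).biUnion (level k)

/-- Length of the longest common prefix of two lists. -/
def lcp : List ℕ → List ℕ → ℕ
  | a :: as, b :: bs => if a = b then lcp as bs + 1 else 0
  | _, _ => 0

/-- The graph distance between two vertices of the tree. -/
def treeDist (u w : List ℕ) : ℕ := (u.length - lcp u w) + (w.length - lcp u w)

/-- `v` lies on the (unique) geodesic path joining `u` and `w` in the tree. -/
def onPath (v u w : List ℕ) : Prop := treeDist u v + treeDist v w = treeDist u w

instance (v u w : List ℕ) : Decidable (onPath v u w) := by
  unfold onPath; infer_instance

/-- The traffic through `v` in `T_n`: the number of unordered pairs `{u, w}` of distinct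
vertices of `T_n` such that `v` lies on the unique path joining `u` and `w`. -/
def traffic (k : ℕ → ℕ) (n : ℕ) (v : List ℕ) : ℕ :=
  (((T k n).powersetCard 2).filter
    (fun s => ∃ u ∈ s, ∃ w ∈ s, u ≠ w ∧ onPath v u w)).card

/-- The proportion of the traffic of `T_n` passing through `v`:
`p_n(v) = l_n(v) / (N (N - 1) / 2)`. -/
noncomputable def trafficProp (k : ℕ → ℕ) (n : ℕ) (v : List ℕ) : ℝ :=
  (traffic k n v : ℝ) / ((Ncard k n : ℝ) * ((Ncard k n : ℝ) - 1) / 2)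


@[simp] lemma lcp_cons_cons (a b : ℕ) (as bs : List ℕ) :
    lcp (a :: as) (b :: bs) = if a = b then lcp as bs + 1 else 0 := rfl
@[simp] lemma lcp_nil_left (w : List ℕ) : lcp [] w = 0 := by cases w <;> rfl
@[simp] lemma lcp_nil_right (u : List ℕ) : lcp u [] = 0 := by cases u <;> rfl

lemma lcp_comm : ∀ u w : List ℕ, lcp u w = lcp w u
  | a :: as, b :: bs => by
    by_cases h : a = b
    · subst h; simp [lcp_comm as bs]
    · simp [h, Ne.symm h]
  | [], w => by simp
  | u, [] => by simp

lemma lcp_le_left : ∀ u w : List ℕ, lcp u w ≤ u.length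
  | a :: as, b :: bs => by
    by_cases h : a = b
    · simpa [h] using lcp_le_left as bs
    · simp [h]
  | [], w => by simp
  | u, [] => by simp

lemma lcp_le_right (u w : List ℕ) : lcp u w ≤ w.length := by
  rw [lcp_comm]; exact lcp_le_left w u

lemma lcp_self : ∀ u : List ℕ, lcp u u = u.length
  | [] => rfl
  | a :: as => by simp [lcp_self as]

lemma lcp_append : ∀ p u w : List ℕ, lcp (p ++ u) (p ++ w) = p.length + lcp u w
  | [], u, w => by simp
  | a :: p, u, w => by simp [lcp_append p u w]; ring

lemma lcp_eq_length_iff : ∀ u w : List ℕ, lcp u w = u.length ↔ u <+: w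
  | [], w => by simp
  | a :: as, [] => by
    simp only [lcp_nil_right, List.length_cons]
    constructor
    · omega
    · intro h; exact absurd (h.length_le) (by simp)
  | a :: as, b :: bs => by
    by_cases h : a = b
    · subst h
      simp [lcp_eq_length_iff as bs, List.cons_prefix_cons]
    · simp [h, List.cons_prefix_cons]

lemma min_lcp_le : ∀ u v w : List ℕ, min (lcp u v) (lcp v w) ≤ lcp u w
  | a :: as, b :: bs, c :: cs => by
    by_cases hab : a = b
    · by_cases hbc : b = c
      · subst hab; subst hbc
        have := min_lcp_le as bs cs
        simp only [lcp_cons_cons, eq_self_iff_true, if_true]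
        omega
      · subst hab; simp [hbc]
    · simp [hab]
  | [], v, w => by simp
  | u, [], w => by simp
  | a :: as, b :: bs, [] => by simp

lemma lcp_of_prefix_of_lt {v u w : List ℕ} (h : v <+: u) (hlt : lcp v w < v.length) :
    lcp u w = lcp v w := by
  obtain ⟨t, rfl⟩ := h
  induction v generalizing w with
  | nil => simp at hlt
  | cons a as ih =>
    cases w with
    | nil => simp
    | cons b bs =>
      by_cases hab : a = b
      · subst hab
        simp only [List.cons_append, lcp_cons_cons, eq_self_iff_true, if_true, List.length_cons] at *
        have := ih (w := bs) (by omega)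
        omega
      · simp [hab]


lemma lcp_of_prefix {v u : List ℕ} (h : v <+: u) : lcp v u = v.length :=
  (lcp_eq_length_iff v u).2 h

lemma lcp_of_prefix' {v u : List ℕ} (h : v <+: u) : lcp u v = v.length := by
  rw [lcp_comm]; exact lcp_of_prefix h

lemma lcp_pos {t s : List ℕ} (h : 0 < lcp t s) :
    ∃ x t' s', t = x :: t' ∧ s = x :: s' := by
  match t, s with
  | a :: as, b :: bs =>
    by_cases hab : a = b
    · exact ⟨a, as, bs, rfl, by rw [hab]⟩
    · simp [lcp, hab] at h
  | [], s => simp [lcp] at h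
  | a :: as, [] => simp [lcp] at h

lemma treeDist_comm (u w : List ℕ) : treeDist u w = treeDist w u := by
  unfold treeDist; rw [lcp_comm]; omega

lemma onPath_comm {v u w : List ℕ} (h : onPath v u w) : onPath v w u := by
  unfold onPath at *
  rw [treeDist_comm w v, treeDist_comm v u, treeDist_comm w u]
  omega

/-- Same side of `v`: both outside the subtree of `v`, or both in the same child subtree. -/
def sameSide (v u w : List ℕ) : Prop :=
  (¬ v <+: u ∧ ¬ v <+: w) ∨ ∃ x, (v ++ [x]) <+: u ∧ (v ++ [x]) <+: w

lemma onPath_of_prefix_left {v u w : List ℕ} (hu : v <+: u) (hw : ¬ v <+: w) :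
    onPath v u w := by
  have hb : lcp v w < v.length :=
    lt_of_le_of_ne (lcp_le_left v w) (fun h => hw ((lcp_eq_length_iff v w).1 h))
  have hc : lcp u w = lcp v w := lcp_of_prefix_of_lt hu hb
  have h1 : lcp u v = v.length := lcp_of_prefix' hu
  have h2 : v.length ≤ u.length := hu.length_le
  have h3 : lcp v w ≤ w.length := lcp_le_right v w
  unfold onPath treeDist
  omega

lemma onPath_iff (v u w : List ℕ) : onPath v u w ↔ ¬ sameSide v u w := by
  constructor
  · intro h hs
    rcases hs with ⟨hu, hw⟩ | ⟨x, hxu, hxw⟩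
    · have ha : lcp u v < v.length :=
        lt_of_le_of_ne (lcp_le_right u v)
          (fun hh => hu ((lcp_eq_length_iff v u).1 (by rw [lcp_comm]; exact hh)))
      have hb : lcp v w < v.length :=
        lt_of_le_of_ne (lcp_le_left v w) (fun hh => hw ((lcp_eq_length_iff v w).1 hh))
      have hmin := min_lcp_le u v w
      have h1 := lcp_le_left u v
      have h2 := lcp_le_right v w
      have h3 := lcp_le_left u w
      have h4 := lcp_le_right u w
      unfold onPath treeDist at h
      omega
    · have hu : v <+: u := (List.prefix_append v [x]).trans hxu
      have hw : v <+: w := (List.prefix_append v [x]).trans hxw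
      have h1 : lcp u v = v.length := lcp_of_prefix' hu
      have h2 : lcp v w = v.length := lcp_of_prefix hw
      have hmin := min_lcp_le u (v ++ [x]) w
      rw [lcp_of_prefix' hxu, lcp_of_prefix hxw] at hmin
      simp only [List.length_append, List.length_cons, List.length_nil] at hmin
      have h3 := lcp_le_left u w
      have h4 := lcp_le_right u w
      have h5 : v.length ≤ u.length := hu.length_le
      have h6 : v.length ≤ w.length := hw.length_le
      unfold onPath treeDist at h
      omega
  · intro hs
    rw [sameSide] at hs
    push_neg at hs
    obtain ⟨hs1, hs2⟩ := hs
    by_cases hu : v <+: u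
    · by_cases hw : v <+: w
      · obtain ⟨t, rfl⟩ := hu
        obtain ⟨s, rfl⟩ := hw
        have hts : lcp t s = 0 := by
          by_contra hne
          obtain ⟨x, t', s', rfl, rfl⟩ := lcp_pos (Nat.pos_of_ne_zero hne)
          exact hs2 x ⟨t', by simp⟩ ⟨s', by simp⟩
        have h1 : lcp (v ++ t) v = v.length := lcp_of_prefix' (List.prefix_append v t)
        have h2 : lcp v (v ++ s) = v.length := lcp_of_prefix (List.prefix_append v s)
        have h3 : lcp (v ++ t) (v ++ s) = v.length := by simp [lcp_append, hts]
        unfold onPath treeDist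
        simp only [h1, h2, h3, List.length_append]
        omega
      · exact onPath_of_prefix_left hu hw
    · by_cases hw : v <+: w
      · exact onPath_comm (onPath_of_prefix_left hw hu)
      · exact absurd (hs1 hu) hw


variable {K : ℕ}

lemma beta_const (m : ℕ) : beta (fun _ => K) m = K ^ m := by
  simp [beta]

lemma mem_level : ∀ {m : ℕ} {u : List ℕ},
    u ∈ level (fun _ => K) m ↔ u.length = m ∧ ∀ a ∈ u, a ∈ Finset.Icc 1 K := by
  intro m
  induction m with
  | zero =>
    intro u
    simp only [level, Finset.mem_singleton]
    constructor
    · rintro rfl; simp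
    · rintro ⟨h, -⟩; exact List.length_eq_zero_iff.1 h
  | succ m ih =>
    intro u
    simp only [level, Finset.mem_biUnion, Finset.mem_image]
    constructor
    · rintro ⟨l, hl, x, hx, rfl⟩
      obtain ⟨hlen, hall⟩ := ih.1 hl
      refine ⟨by simp [hlen], fun a ha => ?_⟩
      rcases List.mem_append.1 ha with h | h
      · exact hall a h
      · simp at h; subst h; exact hx
    · rintro ⟨hlen, hall⟩
      have hne : u ≠ [] := by intro h; subst h; simp at hlen
      refine ⟨u.dropLast, ih.2 ⟨by simp [List.length_dropLast, hlen], fun a ha => hall a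
        (List.dropLast_sublist u |>.mem ha)⟩, u.getLast hne, hall _ (List.getLast_mem hne),
        List.dropLast_concat_getLast hne⟩

lemma length_eq_of_mem_level {m : ℕ} {u : List ℕ} (h : u ∈ level (fun _ => K) m) :
    u.length = m := (mem_level.1 h).1

lemma card_level (m : ℕ) : (level (fun _ => K) m).card = K ^ m := by
  induction m with
  | zero => simp [level]
  | succ m ih =>
    rw [level, Finset.card_biUnion, Finset.sum_congr rfl
      (fun l hl => Finset.card_image_of_injective _ (fun x y h => by simpa using h))]
    · simp [ih, pow_succ]
    · intro l1 h1 l2 h2 hne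
      simp only [Finset.disjoint_left, Finset.mem_image]
      rintro z ⟨x, hx, rfl⟩ ⟨y, hy, hz⟩
      have := (List.append_inj' hz.symm rfl).1
      exact hne this

lemma mem_T {n : ℕ} {u : List ℕ} :
    u ∈ T (fun _ => K) n ↔ u.length ≤ n ∧ ∀ a ∈ u, a ∈ Finset.Icc 1 K := by
  simp only [T, Finset.mem_biUnion, Finset.mem_range, mem_level]
  constructor
  · rintro ⟨m, hm, rfl, h⟩; exact ⟨by omega, h⟩
  · rintro ⟨h1, h2⟩; exact ⟨u.length, by omega, rfl, h2⟩

lemma card_T (n : ℕ) : (T (fun _ => K) n).card = Ncard (fun _ => K) n := by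
  rw [T, Finset.card_biUnion]
  · simp [card_level, Ncard, beta_const]
  · intro m1 h1 m2 h2 hne
    simp only [Finset.disjoint_left]
    intro u hu1 hu2
    exact hne ((length_eq_of_mem_level hu1).symm.trans (length_eq_of_mem_level hu2))

lemma filter_prefix_eq {n : ℕ} {p : List ℕ} (hp : ∀ a ∈ p, a ∈ Finset.Icc 1 K)
    (hlen : p.length ≤ n) :
    (T (fun _ => K) n).filter (fun u => p <+: u)
      = (T (fun _ => K) (n - p.length)).image (fun t => p ++ t) := by
  ext u
  simp only [Finset.mem_filter, Finset.mem_image, mem_T]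
  constructor
  · rintro ⟨⟨hle, hall⟩, t, rfl⟩
    refine ⟨t, ⟨by simp at hle ⊢; omega, fun a ha => hall a (by simp [ha])⟩, rfl⟩
  · rintro ⟨t, ⟨ht1, ht2⟩, rfl⟩
    refine ⟨⟨by simp; omega, fun a ha => ?_⟩, t, rfl⟩
    rcases List.mem_append.1 ha with h | h
    · exact hp a h
    · exact ht2 a h

lemma card_filter_prefix {n : ℕ} {p : List ℕ} (hp : ∀ a ∈ p, a ∈ Finset.Icc 1 K)
    (hlen : p.length ≤ n) :
    ((T (fun _ => K) n).filter (fun u => p <+: u)).card = Ncard (fun _ => K) (n - p.length) := by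
  rw [filter_prefix_eq hp hlen,
    Finset.card_image_of_injective _ (fun x y h => List.append_cancel_left h), card_T]


lemma prefix_eq_of_length {p q u : List ℕ} (h1 : p <+: u) (h2 : q <+: u)
    (h : p.length = q.length) : p = q := by
  rw [List.prefix_iff_eq_take] at h1 h2; rw [h1, h2, h]

lemma traffic_add (l : ℕ) (v : List ℕ) (hv : v ∈ level (fun _ => K) l)
    {n : ℕ} (hn : l + 1 ≤ n) :
    traffic (fun _ => K) n v
      + ((Ncard (fun _ => K) n - Ncard (fun _ => K) (n - l)).choose 2
         + K * (Ncard (fun _ => K) (n - l - 1)).choose 2)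
      = (Ncard (fun _ => K) n).choose 2 := by
  obtain ⟨hvl, hva⟩ := mem_level.1 hv
  set Tn := T (fun _ => K) n with hTn
  set Out := Tn.filter (fun u => ¬ v <+: u) with hOutDef
  set Sub : ℕ → Finset (List ℕ) := fun x => Tn.filter (fun u => (v ++ [x]) <+: u) with hSubDef
  -- the bad set
  have key : ((Tn.powersetCard 2).filter
      (fun s => ¬ ∃ u ∈ s, ∃ w ∈ s, u ≠ w ∧ onPath v u w))
      = Out.powersetCard 2 ∪ (Finset.Icc 1 K).biUnion (fun x => (Sub x).powersetCard 2) := by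
    ext s
    simp only [Finset.mem_filter, Finset.mem_powersetCard, Finset.mem_union, Finset.mem_biUnion]
    constructor
    · rintro ⟨⟨hsub, hcard⟩, hbad⟩
      obtain ⟨u, w, hne, rfl⟩ := Finset.card_eq_two.1 hcard
      have hnot : ¬ onPath v u w := by
        intro h
        exact hbad ⟨u, by simp, w, by simp, hne, h⟩
      have hss : sameSide v u w := not_not.1 ((not_iff_not.2 (onPath_iff v u w)).1 hnot)
      have hu : u ∈ Tn := hsub (by simp)
      have hw : w ∈ Tn := hsub (by simp)
      rcases hss with ⟨h1, h2⟩ | ⟨x, h1, h2⟩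
      · left
        refine ⟨?_, hcard⟩
        intro z hz
        rcases Finset.mem_insert.1 hz with rfl | hz
        · exact Finset.mem_filter.2 ⟨hu, h1⟩
        · rw [Finset.mem_singleton.1 hz]
          exact Finset.mem_filter.2 ⟨hw, h2⟩
      · right
        refine ⟨x, ?_, ?_, hcard⟩
        · -- x ∈ Icc 1 K
          have hxm : x ∈ u := h1.subset (by simp)
          exact (mem_T.1 hu).2 x hxm
        · intro z hz
          rcases Finset.mem_insert.1 hz with rfl | hz
          · exact Finset.mem_filter.2 ⟨hu, h1⟩
          · rw [Finset.mem_singleton.1 hz]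
            exact Finset.mem_filter.2 ⟨hw, h2⟩
    · rintro (⟨hsub, hcard⟩ | ⟨x, hx, hsub, hcard⟩)
      · refine ⟨⟨hsub.trans (Finset.filter_subset _ _), hcard⟩, ?_⟩
        rintro ⟨u, hu, w, hw, hne, hop⟩
        have h1 := (Finset.mem_filter.1 (hsub hu)).2
        have h2 := (Finset.mem_filter.1 (hsub hw)).2
        exact (onPath_iff v u w).1 hop (Or.inl ⟨h1, h2⟩)
      · refine ⟨⟨hsub.trans (Finset.filter_subset _ _), hcard⟩, ?_⟩
        rintro ⟨u, hu, w, hw, hne, hop⟩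
        have h1 := (Finset.mem_filter.1 (hsub hu)).2
        have h2 := (Finset.mem_filter.1 (hsub hw)).2
        exact (onPath_iff v u w).1 hop (Or.inr ⟨x, h1, h2⟩)
  -- counting
  have hsplit : ((Tn.powersetCard 2).filter
        (fun s => ∃ u ∈ s, ∃ w ∈ s, u ≠ w ∧ onPath v u w)).card
      + ((Tn.powersetCard 2).filter
        (fun s => ¬ ∃ u ∈ s, ∃ w ∈ s, u ≠ w ∧ onPath v u w)).card
      = (Tn.powersetCard 2).card :=
    Finset.card_filter_add_card_filter_not _
  have hdisj1 : Disjoint (Out.powersetCard 2)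
      ((Finset.Icc 1 K).biUnion (fun x => (Sub x).powersetCard 2)) := by
    simp only [Finset.disjoint_left, Finset.mem_powersetCard, Finset.mem_biUnion]
    rintro s ⟨hsub, hcard⟩ ⟨x, hx, hsub', hcard'⟩
    have hne : s.Nonempty := Finset.card_pos.1 (by omega)
    obtain ⟨u, hu⟩ := hne
    have h1 := (Finset.mem_filter.1 (hsub hu)).2
    have h2 := (Finset.mem_filter.1 (hsub' hu)).2
    exact h1 ((List.prefix_append v [x]).trans h2)
  have hdisj2 : ∀ x ∈ Finset.Icc 1 K, ∀ y ∈ Finset.Icc 1 K, x ≠ y →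
      Disjoint ((Sub x).powersetCard 2) ((Sub y).powersetCard 2) := by
    intro x hx y hy hxy
    simp only [Finset.disjoint_left, Finset.mem_powersetCard]
    rintro s ⟨hsub, hcard⟩ ⟨hsub', hcard'⟩
    have hne : s.Nonempty := Finset.card_pos.1 (by omega)
    obtain ⟨u, hu⟩ := hne
    have h1 := (Finset.mem_filter.1 (hsub hu)).2
    have h2 := (Finset.mem_filter.1 (hsub' hu)).2
    have : v ++ [x] = v ++ [y] := prefix_eq_of_length h1 h2 (by simp)
    exact hxy (by simpa using this)
  have hOutCard : Out.card = Ncard (fun _ => K) n - Ncard (fun _ => K) (n - l) := by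
    have h1 : (Tn.filter (fun u => v <+: u)).card + Out.card = Tn.card :=
      Finset.card_filter_add_card_filter_not _
    have h2 : (Tn.filter (fun u => v <+: u)).card = Ncard (fun _ => K) (n - l) := by
      have h := card_filter_prefix (K := K) (n := n) (p := v) hva (by omega)
      rw [hvl] at h
      exact h
    have h3 : Tn.card = Ncard (fun _ => K) n := by rw [hTn, card_T]
    omega
  have hSubCard : ∀ x ∈ Finset.Icc 1 K, (Sub x).card = Ncard (fun _ => K) (n - l - 1) := by
    intro x hx
    have hp : ∀ a ∈ v ++ [x], a ∈ Finset.Icc 1 K := by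
      intro a ha
      rcases List.mem_append.1 ha with h | h
      · exact hva a h
      · simp at h; subst h; exact hx
    have h := card_filter_prefix (K := K) (n := n) (p := v ++ [x]) hp (by simp [hvl]; omega)
    have hL : (v ++ [x]).length = l + 1 := by simp [hvl]
    rw [hL] at h
    have he : n - (l + 1) = n - l - 1 := by omega
    rw [he] at h
    exact h
  have hbadcard : (Out.powersetCard 2 ∪
      (Finset.Icc 1 K).biUnion (fun x => (Sub x).powersetCard 2)).card
      = (Ncard (fun _ => K) n - Ncard (fun _ => K) (n - l)).choose 2 + K * (Ncard (fun _ => K) (n - l - 1)).choose 2 := by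
    rw [Finset.card_union_of_disjoint hdisj1, Finset.card_biUnion hdisj2]
    rw [Finset.card_powersetCard, hOutCard]
    congr 1
    rw [Finset.sum_congr rfl (fun x hx => by rw [Finset.card_powersetCard, hSubCard x hx])]
    simp [Nat.card_Icc]
  have htot : (Tn.powersetCard 2).card = (Ncard (fun _ => K) n).choose 2 := by
    rw [Finset.card_powersetCard, hTn, card_T]
  rw [key, hbadcard, htot] at hsplit
  exact hsplit

section Analysis
variable {K : ℕ}

lemma Ncard_mono : Monotone (Ncard (fun _ => K)) := by
  intro a b hab
  exact Finset.sum_le_sum_of_subset (Finset.range_subset_range.2 (by omega))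

lemma beta_const' (m : ℕ) : beta (fun _ => K) m = K ^ m := by simp [beta]

lemma Ncard_const (n : ℕ) : Ncard (fun _ => K) n = ∑ m ∈ Finset.range (n + 1), K ^ m := by
  simp [Ncard, beta_const']

lemma Ncard_ge (hK : 1 ≤ K) (n : ℕ) : n + 1 ≤ Ncard (fun _ => K) n := by
  rw [Ncard_const]
  calc n + 1 = ∑ _m ∈ Finset.range (n + 1), 1 := by simp
    _ ≤ ∑ m ∈ Finset.range (n + 1), K ^ m :=
      Finset.sum_le_sum (fun i _ => Nat.one_le_pow i K (by omega))

lemma tendsto_Ncard (hK : 1 ≤ K) : Tendsto (Ncard (fun _ => K)) atTop atTop := by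
  apply tendsto_atTop_mono _ tendsto_id
  intro n
  have := Ncard_ge hK n
  simp only [id_eq]
  omega

lemma Ncard_split (j : ℕ) {n : ℕ} (hj : j ≤ n) :
    Ncard (fun _ => K) n
      = (∑ m ∈ Finset.range j, K ^ m) + K ^ j * Ncard (fun _ => K) (n - j) := by
  rw [Ncard_const, Ncard_const]
  have h : n + 1 = j + (n - j + 1) := by omega
  rw [h, Finset.sum_range_add]
  congr 1
  rw [Finset.mul_sum]
  exact Finset.sum_congr rfl (fun i _ => pow_add K j i)

lemma tendsto_ratio (hK : 1 ≤ K) (j : ℕ) :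
    Tendsto (fun n => (Ncard (fun _ => K) (n - j) : ℝ) / (Ncard (fun _ => K) n : ℝ)) atTop
      (nhds (((K : ℝ) ^ j)⁻¹)) := by
  set C : ℝ := ((∑ m ∈ Finset.range j, K ^ m : ℕ) : ℝ) with hC
  have hD : Tendsto (fun n => (Ncard (fun _ => K) (n - j) : ℝ)) atTop atTop := by
    apply tendsto_natCast_atTop_atTop.comp
    exact (tendsto_Ncard hK).comp (tendsto_sub_atTop_nat j)
  have h0 : Tendsto (fun n => C / (Ncard (fun _ => K) (n - j) : ℝ)) atTop (nhds 0) :=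
    Tendsto.div_atTop tendsto_const_nhds hD
  have hg : Tendsto (fun n => C / (Ncard (fun _ => K) (n - j) : ℝ) + (K : ℝ) ^ j) atTop
      (nhds ((K : ℝ) ^ j)) := by
    have := h0.add (tendsto_const_nhds (x := (K : ℝ) ^ j))
    simpa using this
  have hK1 : (1 : ℝ) ≤ (K : ℝ) := by exact_mod_cast hK
  have hKpos : (0 : ℝ) < (K : ℝ) ^ j := pow_pos (by linarith) j
  have hinv := hg.inv₀ (ne_of_gt hKpos)
  apply hinv.congr'
  filter_upwards [eventually_ge_atTop j] with n hn
  have hDpos : (0 : ℝ) < (Ncard (fun _ => K) (n - j) : ℝ) := by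
    have h := Ncard_ge hK (n - j)
    have : 0 < Ncard (fun _ => K) (n - j) := by omega
    exact_mod_cast this
  have hsplit : (Ncard (fun _ => K) n : ℝ)
      = C + (K : ℝ) ^ j * (Ncard (fun _ => K) (n - j) : ℝ) := by
    rw [hC]
    push_cast [Ncard_split j hn]
    ring
  rw [hsplit]
  have heq : C / (Ncard (fun _ => K) (n - j) : ℝ) + (K : ℝ) ^ j
      = (C + (K : ℝ) ^ j * (Ncard (fun _ => K) (n - j) : ℝ))
        / (Ncard (fun _ => K) (n - j) : ℝ) := by
    field_simp
  rw [heq, inv_div]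


lemma main (hK : 1 ≤ K) (l : ℕ) (v : List ℕ) (hv : v ∈ level (fun _ => K) l) :
    Tendsto (fun n => trafficProp (fun _ => K) n v) atTop
      (nhds ((1 / (K : ℝ) ^ l) * (2 - 1 / (K : ℝ) ^ l - 1 / (K : ℝ) ^ (l + 1)))) := by
  have hK1 : (1 : ℝ) ≤ (K : ℝ) := by exact_mod_cast hK
  have hKne : (K : ℝ) ≠ 0 := by linarith
  set δ : ℝ := ((K : ℝ) ^ l)⁻¹ with hδ
  set σ : ℝ := ((K : ℝ) ^ (l + 1))⁻¹ with hσ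
  set d : ℕ → ℝ := fun n => (Ncard (fun _ => K) (n - l) : ℝ) / (Ncard (fun _ => K) n : ℝ)
    with hdDef
  set s : ℕ → ℝ := fun n => (Ncard (fun _ => K) (n - l - 1) : ℝ) / (Ncard (fun _ => K) n : ℝ)
    with hsDef
  set e : ℕ → ℝ := fun n => ((Ncard (fun _ => K) n : ℝ))⁻¹ with heDef
  have hd : Tendsto d atTop (nhds δ) := tendsto_ratio hK l
  have hs : Tendsto s atTop (nhds σ) := by
    have h := tendsto_ratio hK (l + 1)
    rw [hsDef]
    simp only [Nat.sub_sub]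
    exact h
  have he : Tendsto e atTop (nhds 0) := by
    apply Tendsto.inv_tendsto_atTop
    exact tendsto_natCast_atTop_atTop.comp (tendsto_Ncard hK)
  have hone : Tendsto (fun n => 1 - d n) atTop (nhds (1 - δ)) := tendsto_const_nhds.sub hd
  have hnum : Tendsto
      (fun n => ((1 - d n) ^ 2 - (1 - d n) * e n) + (K : ℝ) * ((s n) ^ 2 - s n * e n)) atTop
      (nhds (((1 - δ) ^ 2 - (1 - δ) * 0) + (K : ℝ) * (σ ^ 2 - σ * 0))) :=
    ((hone.pow 2).sub (hone.mul he)).add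
      (tendsto_const_nhds.mul ((hs.pow 2).sub (hs.mul he)))
  have hden : Tendsto (fun n => 1 - e n) atTop (nhds (1 - 0)) := tendsto_const_nhds.sub he
  have H : Tendsto
      (fun n => 1 - (((1 - d n) ^ 2 - (1 - d n) * e n)
        + (K : ℝ) * ((s n) ^ 2 - s n * e n)) / (1 - e n)) atTop
      (nhds (1 - (((1 - δ) ^ 2 - (1 - δ) * 0) + (K : ℝ) * (σ ^ 2 - σ * 0)) / (1 - 0))) :=
    tendsto_const_nhds.sub (hnum.div hden (by norm_num))
  have htv : (1 / (K : ℝ) ^ l) * (2 - 1 / (K : ℝ) ^ l - 1 / (K : ℝ) ^ (l + 1))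
      = 1 - (((1 - δ) ^ 2 - (1 - δ) * 0) + (K : ℝ) * (σ ^ 2 - σ * 0)) / (1 - 0) := by
    rw [hδ, hσ, pow_succ]
    have hp : (K : ℝ) ^ l ≠ 0 := pow_ne_zero l hKne
    field_simp
    ring
  rw [htv]
  apply H.congr'
  filter_upwards [eventually_ge_atTop (l + 1)] with n hn
  -- pointwise equality for n ≥ l + 1
  have hta := traffic_add l v hv hn
  set N := Ncard (fun _ => K) n with hN
  set D := Ncard (fun _ => K) (n - l) with hD
  set S := Ncard (fun _ => K) (n - l - 1) with hS
  have hDN : D ≤ N := Ncard_mono (by omega)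
  have hN2 : 2 ≤ N := le_trans (by omega) (Ncard_ge hK n)
  have hx2 : (2 : ℝ) ≤ (N : ℝ) := by exact_mod_cast hN2
  have hxne : (N : ℝ) ≠ 0 := by linarith
  have hx1ne : (N : ℝ) - 1 ≠ 0 := by linarith
  have hcast : (traffic (fun _ => K) n v : ℝ)
      = (N : ℝ) * ((N : ℝ) - 1) / 2
        - (((N : ℝ) - (D : ℝ)) * ((N : ℝ) - (D : ℝ) - 1) / 2
          + (K : ℝ) * ((S : ℝ) * ((S : ℝ) - 1) / 2)) := by
    have hc := congrArg (fun m : ℕ => (m : ℝ)) hta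
    push_cast [Nat.cast_choose_two, Nat.cast_sub hDN] at hc
    linarith
  show _ = trafficProp (fun _ => K) n v
  rw [trafficProp, hcast]
  rw [hdDef, hsDef, heDef]
  simp only [← hN, ← hD, ← hS]
  field_simp

end Analysis

/-- In the `k`-regular case (every vertex at depth `m < n` has exactly `k` children),
for a vertex `v` at depth `l` the proportion of traffic through `v` converges to
`(1/k^l) (2 - 1/k^l - 1/k^(l+1))`; in particular for the root it converges to `1 - 1/k`. -/
theorem traffic_prop_tendsto_regular (K : ℕ) (hK : 1 ≤ K) (l : ℕ) (v : List ℕ)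
    (hv : v ∈ level (fun _ => K) l) :
    Tendsto (fun n => trafficProp (fun _ => K) n v) atTop
      (nhds ((1 / (K : ℝ) ^ l) * (2 - 1 / (K : ℝ) ^ l - 1 / (K : ℝ) ^ (l + 1)))) ∧
    Tendsto (fun n => trafficProp (fun _ => K) n []) atTop
      (nhds (1 - 1 / (K : ℝ))) := by
  refine ⟨main hK l v hv, ?_⟩
  have h := main hK 0 [] (by simp [level])
  have hval : (1 / (K : ℝ) ^ 0) * (2 - 1 / (K : ℝ) ^ 0 - 1 / (K : ℝ) ^ (0 + 1))
      = 1 - 1 / (K : ℝ) := by norm_num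
  rwa [hval] at h

end TreeTraffic
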